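/- Let M:(ℝ,≤)²→vect_F be a persistence module admitting a finite convex isotopy subdivision of (ℝ,≤)² subordinate to M, with set of chambers {J_p | p ∈ P}. Define a relation → on P by p → q iff p = q, or p ≠ q and there exist x ∈ J_p and y ∈ J_q with x ≤ y. Then the transitive closure ≤ of → is a partial order on P; in particular, if p → q and q → p then p = q. -/

import Mathlib

/-- A persistence module over a preorder `P` with coefficients in a field `F`:
a functor `(P,≤) → Vect_F`, given by vector spaces `V p` and linear maps
`map : i ≤ j → (V i →ₗ[F] V j)` satisfying the functoriality equations. -/
structure PersistenceModule (F : Type) [Field F] (P : Type) [Preorder P] where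
  V : P → Type
  [addCommGroup : ∀ p, AddCommGroup (V p)]
  [module : ∀ p, Module F (V p)]
  map : ∀ {i j : P}, i ≤ j → (V i →ₗ[F] V j)
  map_id : ∀ i : P, map (le_refl i) = LinearMap.id
  map_comp : ∀ {i j k : P} (hij : i ≤ j) (hjk : j ≤ k),
    (map hjk).comp (map hij) = map (hij.trans hjk)

attribute [instance] PersistenceModule.addCommGroup PersistenceModule.module

/-- A zigzag path `a - x₁ - ⋯ - xₙ - b` in a preorder, where each consecutive
pair of points is comparable. -/
inductive Zigzag (P : Type) [Preorder P] : P → P → Type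
  | single (a : P) : Zigzag P a a
  | consLe {a b c : P} (h : a ≤ b) (p : Zigzag P b c) : Zigzag P a c
  | consGe {a b c : P} (h : b ≤ a) (p : Zigzag P b c) : Zigzag P a c

/-- Convexity of a subset of a poset: `i ≤ j ≤ k` with `i, k ∈ J` implies `j ∈ J`. -/
def PosetConvex {P : Type} [Preorder P] (J : Set P) : Prop :=
  ∀ i ∈ J, ∀ k ∈ J, ∀ j : P, i ≤ j → j ≤ k → j ∈ J

/-- Connectedness: any two points of `J` are joined by a finite zigzag path inside `J`. -/
def ZigzagConnected {P : Type} [Preorder P] (J : Set P) : Prop :=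
  ∀ a b : J, Nonempty (Zigzag (↥J) a b)

/-- The relation `p → q` between chambers of a subdivision `j ↦ C j`:
`p → q` iff `p = q`, or `p ≠ q` and there are `x ∈ J_p`, `y ∈ J_q` with `x ≤ y`. -/
def chamberRel (C : ℝ × ℝ → Set (ℝ × ℝ)) : Set (ℝ × ℝ) → Set (ℝ × ℝ) → Prop :=
  fun A B => A ∈ Set.range C ∧ B ∈ Set.range C ∧
    (A = B ∨ (A ≠ B ∧ ∃ x ∈ A, ∃ y ∈ B, x ≤ y))

namespace Statement10Proof

abbrev Pt : Type := ℝ × ℝ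

/-- Bundled hypotheses about the chamber map. -/
structure Ctx (C : Pt → Set Pt) : Prop where
  mem : ∀ j, j ∈ C j
  part : ∀ j k, k ∈ C j → C k = C j
  conv : ∀ j, PosetConvex (C j)

/-- A legal fence step: either an up-step (any chambers) or a down-step within one chamber. -/
def Step (C : Pt → Set Pt) (a b : Pt) : Prop :=
  a ≤ b ∨ (b ≤ a ∧ C a = C b)

lemma Ctx.sand {C : Pt → Set Pt} (hC : Ctx C) {a b c : Pt} (hab : a ≤ b) (hbc : b ≤ c)
    (hac : C a = C c) : C b = C a := by
  have hc : c ∈ C a := by rw [hac]; exact hC.mem c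
  exact hC.part a b (hC.conv a a (hC.mem a) c hc b hab hbc)

/-- A "bad" cyclic fence of period `n`. -/
def Bundle (C : Pt → Set Pt) (n : ℕ) (g : ℕ → Pt) : Prop :=
  (∀ i, g (i + n) = g i) ∧ (∀ i, Step C (g i) (g (i + 1))) ∧
    ∃ j, C (g j) ≠ C (g (j + 1))

def IsBad (C : Pt → Set Pt) (n : ℕ) : Prop := ∃ g, Bundle C n g

lemma per_mul {g : ℕ → Pt} {n : ℕ} (hper : ∀ i, g (i + n) = g i) :
    ∀ (q i : ℕ), g (i + n * q) = g i := by
  intro q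
  induction q with
  | zero => intro i; simp
  | succ q ih =>
      intro i
      have : i + n * (q + 1) = (i + n * q) + n := by ring
      rw [this, hper, ih]

lemma per_mod {g : ℕ → Pt} {n : ℕ} (hper : ∀ i, g (i + n) = g i) (hn : 0 < n) (i : ℕ) :
    g i = g (i % n) := by
  conv_lhs => rw [← Nat.mod_add_div i n]
  exact per_mul hper _ _

lemma mod_succ_eq {i n : ℕ} (hn : 1 < n) :
    (i + 1) % n = if i % n + 1 = n then 0 else i % n + 1 := by
  have h1 : (i + 1) % n = (i % n + 1) % n := by
    conv_lhs => rw [Nat.add_mod, Nat.mod_eq_of_lt hn]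
  rw [h1]
  by_cases h : i % n + 1 = n
  · simp [h]
  · have hlt : i % n + 1 < n := by
      have := Nat.mod_lt i (show 0 < n by omega)
      omega
    rw [if_neg h, Nat.mod_eq_of_lt hlt]

lemma Bundle.rot {C : Pt → Set Pt} {n : ℕ} {g : ℕ → Pt} (hb : Bundle C n g) (hn : 1 ≤ n)
    (r : ℕ) : Bundle C n (fun i => g (i + r)) := by
  obtain ⟨hper, hstep, j₀, hbd⟩ := hb
  refine ⟨?_, ?_, ?_⟩
  · intro i
    show g (i + n + r) = g (i + r)
    have : i + n + r = (i + r) + n := by ring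
    rw [this, hper]
  · intro i
    show Step C (g (i + r)) (g (i + 1 + r))
    have : i + 1 + r = (i + r) + 1 := by ring
    rw [this]; exact hstep (i + r)
  · refine ⟨j₀ + (n - 1) * r, ?_⟩
    have h1 : j₀ + (n - 1) * r + r = j₀ + n * r := by
      have : (n - 1) * r + r = n * r := by
        have : (n - 1) + 1 = n := Nat.sub_add_cancel hn
        calc (n - 1) * r + r = ((n - 1) + 1) * r := by ring
        _ = n * r := by rw [this]
      omega
    show C (g (j₀ + (n-1)*r + r)) ≠ C (g (j₀ + (n-1)*r + 1 + r))
    have h2 : j₀ + (n - 1) * r + 1 + r = (j₀ + 1) + n * r := by omega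
    rw [h1, h2, per_mul hper, per_mul hper]
    exact hbd

end Statement10Proof
namespace Statement10Proof

/-- If a bad cyclic fence of period `N+1` has a "shortcut" `Step (g 0) (g 2)`,
then there is a bad cyclic fence of period `N`. -/
lemma Bundle.reduce {C : Pt → Set Pt} (hC : Ctx C) {N : ℕ} {g : ℕ → Pt} (hN : 2 ≤ N)
    (hb : Bundle C (N + 1) g) (h2 : Step C (g 0) (g 2)) : IsBad C N := by
  obtain ⟨hper, hstep, j₀, hbd⟩ := hb
  have hn1 : 0 < N + 1 := by omega
  have hNpos : 0 < N := by omega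
  -- the new fence skips index 1
  set σ : ℕ → ℕ := fun k => if k = 0 then 0 else k + 1 with hσ
  set h : ℕ → Pt := fun i => g (σ (i % N)) with hh
  refine ⟨h, ?_, ?_, ?_⟩
  · intro i
    show g (σ ((i + N) % N)) = g (σ (i % N))
    rw [Nat.add_mod_right]
  · intro i
    set k := i % N with hk
    have hklt : k < N := Nat.mod_lt _ hNpos
    have hsucc : (i + 1) % N = if k + 1 = N then 0 else k + 1 := mod_succ_eq (by omega)
    show Step C (g (σ k)) (g (σ ((i+1) % N)))
    rcases eq_or_ne k 0 with hk0 | hk0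
    · -- step from g 0 to g 2
      have : (i+1) % N = 1 := by rw [hsucc, hk0]; simp; omega
      rw [this, hk0]
      simpa [hσ] using h2
    · rcases eq_or_ne (k + 1) N with hkN | hkN
      · -- wrap: from g (k+1) = g N to g 0
        have : (i+1) % N = 0 := by rw [hsucc, if_pos hkN]
        rw [this]
        have hσk : σ k = k + 1 := by simp [hσ, hk0]
        rw [hσk, hkN]
        have hstepN : Step C (g N) (g (N + 1)) := hstep N
        have : g (N + 1) = g 0 := by
          have := hper 0
          simpa using this
        rw [this] at hstepN
        simpa [hσ] using hstepN
      · have : (i+1) % N = k + 1 := by rw [hsucc, if_neg hkN]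
        rw [this]
        have hσk : σ k = k + 1 := by simp [hσ, hk0]
        have hσk1 : σ (k+1) = k + 2 := by simp [hσ]
        rw [hσk, hσk1]
        exact hstep (k + 1)
  · -- boundary transfer
    -- normalize the boundary index
    set j₁ := j₀ % (N + 1) with hj₁
    have hj₁lt : j₁ < N + 1 := Nat.mod_lt _ hn1
    have e1 : g j₀ = g j₁ := per_mod hper hn1 j₀
    have e2 : g (j₀ + 1) = g (j₁ + 1) := by
      have : j₀ = j₁ + (N+1) * (j₀ / (N+1)) := by
        rw [hj₁]; exact (Nat.mod_add_div j₀ (N+1)).symm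
      calc g (j₀ + 1) = g ((j₁ + 1) + (N+1) * (j₀ / (N+1))) := by
            congr 1; omega
        _ = g (j₁ + 1) := per_mul hper _ _
    rw [e1, e2] at hbd
    -- case split
    rcases Nat.lt_or_ge j₁ 2 with hj2 | hj2
    · -- boundary at 0 or 1: show C (g 0) ≠ C (g 2), new boundary at index 0
      have key : C (g 0) ≠ C (g 2) := by
        intro heq
        have s0 := hstep 0
        have s1 := hstep 1
        interval_cases j₁
        · -- C (g 0) ≠ C (g 1)
          rcases s0 with h0 | ⟨_, h0c⟩
          · rcases s1 with h1 | ⟨_, h1c⟩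
            · exact hbd ((hC.sand h0 h1 heq).symm)
            · exact hbd (h1c ▸ heq)
          · exact hbd h0c
        · -- C (g 1) ≠ C (g 2)
          rcases s1 with h1 | ⟨_, h1c⟩
          · rcases s0 with h0 | ⟨_, h0c⟩
            · have := hC.sand h0 h1 heq
              exact hbd (this.trans heq)
            · exact hbd (h0c.symm.trans heq)
          · exact hbd h1c
      refine ⟨0, ?_⟩
      have hv0 : h 0 = g 0 := by simp [hh, hσ, Nat.mod_eq_of_lt hNpos]
      have hv1 : h 1 = g 2 := by
        have : (1 : ℕ) % N = 1 := Nat.mod_eq_of_lt (by omega)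
        simp [hh, hσ, this]
      rw [hv0, hv1]; exact key
    · -- boundary at j₁ with 2 ≤ j₁ ≤ N: new boundary at j₁ - 1
      refine ⟨j₁ - 1, ?_⟩
      have hj₁1 : j₁ - 1 < N := by omega
      have hv0 : h (j₁ - 1) = g j₁ := by
        have hm : (j₁ - 1) % N = j₁ - 1 := Nat.mod_eq_of_lt hj₁1
        have : σ (j₁ - 1) = j₁ := by
          simp only [hσ]
          rw [if_neg (by omega)]
          omega
        simp only [hh, hm, this]
      have hv1 : h (j₁ - 1 + 1) = g (j₁ + 1) := by
        have hj : j₁ - 1 + 1 = j₁ := by omega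
        rw [hj]
        rcases eq_or_ne j₁ N with hjN | hjN
        · have hm : j₁ % N = 0 := by rw [hjN, Nat.mod_self]
          have hval : σ 0 = 0 := by simp [hσ]
          have : g (j₁ + 1) = g 0 := by
            rw [hjN]
            have := hper 0
            simpa using this
          simp only [hh, hm, hval, this]
        · have hm : j₁ % N = j₁ := Nat.mod_eq_of_lt (by omega)
          have : σ j₁ = j₁ + 1 := by simp [hσ]; omega
          simp only [hh, hm, this]
      rw [hv0, hv1]; exact hbd

end Statement10Proof
namespace Statement10Proof

lemma ple {a b : Pt} : a ≤ b ↔ a.1 ≤ b.1 ∧ a.2 ≤ b.2 := Prod.le_def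

lemma cmp_of_eq_fst {a b : Pt} (h : a.1 = b.1) : a ≤ b ∨ b ≤ a := by
  rcases le_total a.2 b.2 with h2 | h2
  · exact Or.inl (ple.mpr ⟨le_of_eq h, h2⟩)
  · exact Or.inr (ple.mpr ⟨le_of_eq h.symm, h2⟩)

/-- The core geometric step: a minimal alternating bad fence whose valley at index 2
has minimal x-coordinate can be shortened. -/
lemma core2 {C : Pt → Set Pt} (hC : Ctx C) {N m : ℕ} {g : ℕ → Pt}
    (hN : 2 ≤ N) (hm : N + 1 = 2 * m) (hm2 : 2 ≤ m)
    (hb : Bundle C (N+1) g)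
    (H1 : ∀ i, ¬ Step C (g i) (g (i+2)))
    (hpar : ∀ i, (g i ≤ g (i+1)) ↔ i % 2 = 0)
    (hmin : ∀ K, (g 2).1 ≤ (g (2*K)).1) : IsBad C N := by
  obtain ⟨hper, hstep, j₀, hbd⟩ := hb
  have hn1 : 0 < N + 1 := by omega
  have hN4 : 4 ≤ N + 1 := by omega
  -- down-steps at odd indices
  have dirx : ∀ i, i % 2 = 1 → g (i+1) ≤ g i ∧ C (g i) = C (g (i+1)) := by
    intro i hi
    have hnup : ¬ (g i ≤ g (i+1)) := by rw [hpar]; omega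
    rcases hstep i with h | h
    · exact absurd h hnup
    · exact h
  have h01 : g 0 ≤ g 1 := (hpar 0).mpr rfl
  have d12 := dirx 1 rfl
  have h23 : g 2 ≤ g 3 := (hpar 2).mpr rfl
  have d34 := dirx 3 rfl
  -- incomparabilities
  have inc1 : ¬ g 0 ≤ g 2 := fun h => H1 0 (Or.inl h)
  have inc1' : ¬ g 2 ≤ g 0 := by
    intro h
    have hcc : C (g 0) = C (g 2) := hC.sand h h01 d12.2.symm
    exact H1 0 (Or.inr ⟨h, hcc⟩)
  have inc2 : ¬ g 2 ≤ g 4 := fun h => H1 2 (Or.inl h)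
  have inc2' : ¬ g 4 ≤ g 2 := by
    intro h
    have hcc : C (g 2) = C (g 4) := hC.sand h h23 d34.2.symm
    exact H1 2 (Or.inr ⟨h, hcc⟩)
  -- coordinates
  have hm0 : (g 2).1 ≤ (g 0).1 := by simpa using hmin 0
  have hm2' : (g 2).1 ≤ (g 4).1 := by simpa using hmin 2
  have hx0 : (g 2).1 < (g 0).1 := by
    rcases lt_or_eq_of_le hm0 with h | h
    · exact h
    · rcases cmp_of_eq_fst h with h' | h'
      · exact absurd h' inc1'
      · exact absurd h' inc1
  have hx4 : (g 2).1 < (g 4).1 := by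
    rcases lt_or_eq_of_le hm2' with h | h
    · exact h
    · rcases cmp_of_eq_fst h with h' | h'
      · exact absurd h' inc2
      · exact absurd h' inc2'
  have hy0 : (g 0).2 < (g 2).2 := by
    by_contra h
    exact inc1' (ple.mpr ⟨hm0, not_lt.mp h⟩)
  have hy4 : (g 4).2 < (g 2).2 := by
    by_contra h
    exact inc2 (ple.mpr ⟨le_of_lt hx4, not_lt.mp h⟩)
  -- the two replacement peaks
  set J₁ : Pt := ((g 0).1, (g 2).2) with hJ₁
  set J₂ : Pt := ((g 4).1, (g 2).2) with hJ₂
  have hu2J₁ : g 2 ≤ J₁ := ple.mpr ⟨le_of_lt hx0, le_refl _⟩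
  have hu0J₁ : g 0 ≤ J₁ := ple.mpr ⟨le_refl _, le_of_lt hy0⟩
  have hJ₁1 : J₁ ≤ g 1 := by
    refine ple.mpr ⟨?_, ?_⟩
    · exact (ple.mp h01).1
    · exact (ple.mp d12.1).2
  have CJ₁ : C J₁ = C (g 2) := hC.sand hu2J₁ hJ₁1 d12.2.symm
  have hu2J₂ : g 2 ≤ J₂ := ple.mpr ⟨le_of_lt hx4, le_refl _⟩
  have hu4J₂ : g 4 ≤ J₂ := ple.mpr ⟨le_refl _, le_of_lt hy4⟩
  have hJ₂3 : J₂ ≤ g 3 := by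
    refine ple.mpr ⟨?_, ?_⟩
    · exact (ple.mp d34.1).1
    · exact (ple.mp h23).2
  have CJ₂ : C J₂ = C (g 4) := hC.sand hu4J₂ hJ₂3 d34.2.symm
  -- the shortcut step between the two new peaks
  have StepJ : Step C J₁ J₂ := by
    rcases le_total J₁.1 J₂.1 with h | h
    · exact Or.inl (ple.mpr ⟨h, le_refl _⟩)
    · have hle : J₂ ≤ J₁ := ple.mpr ⟨h, le_refl _⟩
      have : C J₂ = C (g 2) := hC.sand hu2J₂ hle CJ₁.symm
      exact Or.inr ⟨hle, CJ₁.trans this.symm⟩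
  -- the modified fence
  set n := N + 1 with hn
  set g' : ℕ → Pt := fun i => if i % n = 1 then J₁ else if i % n = 3 then J₂ else g i with hg'
  have gv : ∀ i, i % n ≠ 1 → i % n ≠ 3 → g' i = g i := by
    intro i h1 h3; simp only [hg', if_neg h1, if_neg h3]
  have gv1 : ∀ i, i % n = 1 → g' i = J₁ := by intro i h1; simp only [hg', if_pos h1]
  have gv3 : ∀ i, i % n = 3 → g' i = J₂ := by
    intro i h3
    have : i % n ≠ 1 := by omega
    simp only [hg', if_neg this, if_pos h3]
  have hb' : Bundle C n g' := by
    refine ⟨?_, ?_, ?_⟩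
    · intro i
      have hmod : (i + n) % n = i % n := Nat.add_mod_right _ _
      by_cases h1 : i % n = 1
      · rw [gv1 _ (by rw [hmod]; exact h1), gv1 _ h1]
      · by_cases h3 : i % n = 3
        · rw [gv3 _ (by rw [hmod]; exact h3), gv3 _ h3]
        · rw [gv _ (by rw [hmod]; exact h1) (by rw [hmod]; exact h3), gv _ h1 h3]
          exact hper i
    · intro i
      set k := i % n with hk
      have hklt : k < n := Nat.mod_lt _ hn1
      have hsucc : (i + 1) % n = if k + 1 = n then 0 else k + 1 := mod_succ_eq (by omega)
      have hgi : g i = g k := per_mod hper hn1 i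
      have hgi1 : g (i+1) = g ((i+1) % n) := per_mod hper hn1 (i+1)
      rcases eq_or_ne k 0 with h0 | h0
      · have hs : (i+1) % n = 1 := by rw [hsucc, if_neg (by omega)]; omega
        rw [gv i (by omega) (by omega), gv1 _ hs, hgi, h0]
        exact Or.inl hu0J₁
      · rcases eq_or_ne k 1 with h1 | h1
        · have hs : (i+1) % n = 2 := by rw [hsucc, if_neg (by omega)]; omega
          rw [gv1 i h1, gv _ (by omega) (by omega), hgi1, hs]
          exact Or.inr ⟨hu2J₁, CJ₁⟩
        · rcases eq_or_ne k 2 with h2 | h2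
          · have hs : (i+1) % n = 3 := by rw [hsucc, if_neg (by omega)]; omega
            rw [gv i (by omega) (by omega), gv3 _ hs, hgi, h2]
            exact Or.inl hu2J₂
          · rcases eq_or_ne k 3 with h3 | h3
            · -- next value is g 4 (possibly via wrap when n = 4)
              have hval : g ((i+1) % n) = g 4 := by
                rcases eq_or_ne (k+1) n with hw | hw
                · have hs : (i+1) % n = 0 := by rw [hsucc, if_pos hw]
                  rw [hs]
                  have : g 4 = g 0 := by
                    have := hper 0
                    have h4 : (0 : ℕ) + n = 4 := by omega
                    rw [h4] at this
                    exact this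
                  rw [this]
                · have hs : (i+1) % n = 4 := by rw [hsucc, if_neg hw]; omega
                  rw [hs]
              have hnot1 : (i+1) % n ≠ 1 := by
                rcases eq_or_ne (k+1) n with hw | hw
                · rw [hsucc, if_pos hw]; omega
                · rw [hsucc, if_neg hw]; omega
              have hnot3 : (i+1) % n ≠ 3 := by
                rcases eq_or_ne (k+1) n with hw | hw
                · rw [hsucc, if_pos hw]; omega
                · rw [hsucc, if_neg hw]; omega
              rw [gv3 i h3, gv _ hnot1 hnot3, hgi1, hval]
              exact Or.inr ⟨hu4J₂, CJ₂⟩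
            · -- k ≥ 4 : untouched
              have hk4 : 4 ≤ k := by omega
              have hnot1 : (i+1) % n ≠ 1 := by
                rcases eq_or_ne (k+1) n with hw | hw
                · rw [hsucc, if_pos hw]; omega
                · rw [hsucc, if_neg hw]; omega
              have hnot3 : (i+1) % n ≠ 3 := by
                rcases eq_or_ne (k+1) n with hw | hw
                · rw [hsucc, if_pos hw]; omega
                · rw [hsucc, if_neg hw]; omega
              rw [gv i (by omega) (by omega), gv _ hnot1 hnot3]
              exact hstep i
    · -- boundary
      set j₁ := j₀ % n with hj₁def
      have hj₁lt : j₁ < n := Nat.mod_lt _ hn1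
      have e1 : g j₀ = g j₁ := per_mod hper hn1 j₀
      have e2 : g (j₀ + 1) = g (j₁ + 1) := by
        have hq : j₀ = j₁ + n * (j₀ / n) := by
          rw [hj₁def]; exact (Nat.mod_add_div j₀ n).symm
        calc g (j₀ + 1) = g ((j₁ + 1) + n * (j₀ / n)) := by congr 1; omega
          _ = g (j₁ + 1) := per_mul hper _ _
      rw [e1, e2] at hbd
      have hj₁even : j₁ % 2 = 0 := by
        by_contra hodd
        exact hbd (dirx j₁ (by omega)).2
      rcases eq_or_ne j₁ 0 with hj0 | hj0
      · refine ⟨0, ?_⟩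
        rw [gv 0 (by simp) (by simp),
            gv1 1 (by rw [Nat.mod_eq_of_lt (by omega)] <;> omega)]
        rw [CJ₁, ← d12.2]
        rw [hj0] at hbd
        exact hbd
      · rcases eq_or_ne j₁ 2 with hj2 | hj2
        · refine ⟨2, ?_⟩
          rw [gv 2 (by rw [Nat.mod_eq_of_lt (by omega)] <;> omega) (by rw [Nat.mod_eq_of_lt (by omega)] <;> omega),
              gv3 3 (by rw [Nat.mod_eq_of_lt (by omega)] <;> omega)]
          rw [CJ₂, ← d34.2]
          rw [hj2] at hbd
          exact hbd
        · have hj4 : 4 ≤ j₁ := by omega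
          have hj₁N : j₁ < N := by
            rcases eq_or_ne j₁ N with hjN | hjN
            · exfalso
              have : N % 2 = 1 := by omega
              omega
            · omega
          refine ⟨j₁, ?_⟩
          rw [gv j₁ (by rw [Nat.mod_eq_of_lt (by omega)] <;> omega)
                (by rw [Nat.mod_eq_of_lt (by omega)] <;> omega),
              gv (j₁+1) (by rw [Nat.mod_eq_of_lt (by omega)] <;> omega)
                (by rw [Nat.mod_eq_of_lt (by omega)] <;> omega)]
          exact hbd
  -- now g' has a shortcut from index 1 to index 3
  have hstepJ : Step C ((fun i => g' (i + 1)) 0) ((fun i => g' (i + 1)) 2) := by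
    show Step C (g' 1) (g' 3)
    rw [gv1 1 (by rw [Nat.mod_eq_of_lt (by omega)] <;> omega),
        gv3 3 (by rw [Nat.mod_eq_of_lt (by omega)] <;> omega)]
    exact StepJ
  exact Bundle.reduce hC hN (hb'.rot (by omega) 1) hstepJ

end Statement10Proof
namespace Statement10Proof

/-- Any bad fence with no shortcuts can be shortened. -/
lemma core1 {C : Pt → Set Pt} (hC : Ctx C) {N : ℕ} {g : ℕ → Pt}
    (hN : 2 ≤ N) (hb : Bundle C (N+1) g)
    (H1 : ∀ i, ¬ Step C (g i) (g (i+2))) : IsBad C N := by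
  have hn1 : (0:ℕ) < N + 1 := by omega
  have alt : ∀ (g' : ℕ → Pt), (∀ i, Step C (g' i) (g' (i+1))) →
      (∀ i, ¬ Step C (g' i) (g' (i+2))) →
      ∀ i, (g' i ≤ g' (i+1)) ↔ ¬ (g' (i+1) ≤ g' (i+2)) := by
    intro g' hstep H1' i
    constructor
    · intro h1 h2
      exact H1' i (Or.inl (h1.trans h2))
    · intro h2
      by_contra h1
      have d1 : g' (i+1) ≤ g' i ∧ C (g' i) = C (g' (i+1)) := by
        rcases hstep i with h | h
        · exact absurd h h1
        · exact h
      have d2 : g' (i+2) ≤ g' (i+1) ∧ C (g' (i+1)) = C (g' (i+2)) := by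
        rcases hstep (i+1) with h | h
        · exact absurd h h2
        · exact h
      exact H1' i (Or.inr ⟨d2.1.trans d1.1, d1.2.trans d2.2⟩)
  suffices key : ∀ (g' : ℕ → Pt), Bundle C (N+1) g' →
      (∀ i, ¬ Step C (g' i) (g' (i+2))) → (g' 0 ≤ g' 1) → IsBad C N by
    by_cases h0 : g 0 ≤ g 1
    · exact key g hb H1 h0
    · refine key (fun i => g (i + 1)) (hb.rot (by omega) 1) (fun i => ?_) ?_
      · show ¬ Step C (g (i+1)) (g (i+2+1))
        have h : i + 2 + 1 = (i+1) + 2 := by ring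
        rw [h]; exact H1 (i+1)
      · show g (0+1) ≤ g (1+1)
        by_contra h12
        exact h0 ((alt g hb.2.1 H1 0).mpr (by simpa using h12))
  intro g' hb' H1' hup0
  have hstep' := hb'.2.1
  have hpar : ∀ i, (g' i ≤ g' (i+1)) ↔ i % 2 = 0 := by
    intro i
    induction i with
    | zero => exact ⟨fun _ => rfl, fun _ => hup0⟩
    | succ k ih =>
        have h := alt g' hstep' H1' k
        constructor
        · intro hk1
          have h1 : ¬ (g' k ≤ g' (k+1)) := fun hk => (h.mp hk) hk1
          have h2 : ¬ (k % 2 = 0) := fun he => h1 (ih.mpr he)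
          omega
        · intro hk1
          have hknot : ¬ (k % 2 = 0) := by omega
          have h1 : ¬ (g' k ≤ g' (k+1)) := fun hk => hknot (ih.mp hk)
          exact not_not.mp (fun h2 => h1 (h.mpr h2))
  -- the period is even
  have e0 : g' (N+1) = g' 0 := by have := hb'.1 0; simpa using this
  have e1 : g' (N+1+1) = g' 1 := by
    have := hb'.1 1
    have h : 1 + (N+1) = N+1+1 := by ring
    rw [h] at this
    exact this
  have hupN : g' (N+1) ≤ g' (N+1+1) := by rw [e0, e1]; exact hup0
  have heven : (N+1) % 2 = 0 := (hpar (N+1)).mp hupN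
  obtain ⟨m, hm⟩ : ∃ m, N + 1 = 2 * m := ⟨(N+1)/2, by omega⟩
  have hm2 : 2 ≤ m := by omega
  -- minimal valley
  have hper2 : ∀ K, g' (2*K) = g' (2*(K % m)) := by
    intro K
    have h1 : 2*K = 2*(K % m) + (N+1)*(K / m) := by
      rw [hm]
      have h := Nat.mod_add_div K m
      calc 2*K = 2*(K % m + m*(K/m)) := by rw [h]
        _ = 2*(K%m) + 2*m*(K/m) := by ring
    rw [h1, per_mul hb'.1]
  obtain ⟨k₀, hk₀mem, hk₀min⟩ := Finset.exists_min_image (Finset.range m)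
    (fun k => (g' (2*k)).1) ⟨0, Finset.mem_range.mpr (by omega)⟩
  have hminall : ∀ K, (g' (2*k₀)).1 ≤ (g' (2*K)).1 := by
    intro K
    rw [hper2 K]
    exact hk₀min _ (Finset.mem_range.mpr (Nat.mod_lt _ (by omega)))
  -- rotate so that the minimal valley sits at index 2
  set r : ℕ := 2*(k₀ + (m-1)) with hr
  have hreven : r % 2 = 0 := by omega
  have b₃ : Bundle C (N+1) (fun i => g' (i + r)) := hb'.rot (by omega) r
  have H1₃ : ∀ i, ¬ Step C (g' (i + r)) (g' (i + 2 + r)) := by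
    intro i
    have h : i + 2 + r = (i + r) + 2 := by ring
    rw [h]; exact H1' (i + r)
  have hpar₃ : ∀ i, ((fun i => g' (i + r)) i ≤ (fun i => g' (i + r)) (i+1)) ↔ i % 2 = 0 := by
    intro i
    show (g' (i + r) ≤ g' (i + 1 + r)) ↔ i % 2 = 0
    have h : i + 1 + r = (i + r) + 1 := by ring
    rw [h, hpar (i + r)]
    omega
  have hmin₃ : ∀ K, ((fun i => g' (i + r)) 2).1 ≤ ((fun i => g' (i + r)) (2*K)).1 := by
    intro K
    show (g' (2 + r)).1 ≤ (g' (2*K + r)).1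
    have h2 : 2 + r = 2*k₀ + (N+1) := by omega
    have hK : 2*K + r = 2*(K + k₀ + (m-1)) := by omega
    have e : g' (2 + r) = g' (2*k₀) := by
      rw [h2]; exact hb'.1 (2*k₀)
    rw [e, hK]
    exact hminall _
  exact core2 hC hN hm hm2 b₃ H1₃ hpar₃ hmin₃

end Statement10Proof
namespace Statement10Proof

theorem no_bad {C : Pt → Set Pt} (hC : Ctx C) : ∀ n, 1 ≤ n → ¬ IsBad C n := by
  intro n
  induction n using Nat.strong_induction_on with
  | _ n ih =>
    intro hn hbad
    obtain ⟨g, hper, hstep, j₀, hbd⟩ := hbad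
    rcases eq_or_ne n 1 with h1 | h1
    · subst h1
      exact hbd (by rw [hper j₀])
    · rcases eq_or_ne n 2 with h2 | h2
      · subst h2
        have e : g (j₀+1+1) = g j₀ := by
          have := hper j₀
          have h : j₀ + 2 = j₀ + 1 + 1 := by ring
          rw [h] at this
          exact this
        have hle1 : g j₀ ≤ g (j₀+1) := by
          rcases hstep j₀ with h | h
          · exact h
          · exact absurd h.2 hbd
        rcases hstep (j₀+1) with h | h
        · rw [e] at h
          exact hbd (by rw [le_antisymm hle1 h])
        · rw [e] at h
          exact hbd h.2.symm
      · obtain ⟨N, rfl⟩ : ∃ N, n = N + 1 := ⟨n - 1, by omega⟩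
        have hN : 2 ≤ N := by omega
        have hb : Bundle C (N+1) g := ⟨hper, hstep, j₀, hbd⟩
        by_cases hrem : ∃ i, Step C (g i) (g (i+2))
        · obtain ⟨i₀, hi₀⟩ := hrem
          have hb' : Bundle C (N+1) (fun i => g (i + i₀)) := hb.rot (by omega) i₀
          have h2' : Step C ((fun i => g (i + i₀)) 0) ((fun i => g (i + i₀)) 2) := by
            show Step C (g (0 + i₀)) (g (2 + i₀))
            have e0 : 0 + i₀ = i₀ := by ring
            have e2 : 2 + i₀ = i₀ + 2 := by ring
            rw [e0, e2]
            exact hi₀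
          exact ih N (by omega) (by omega) (Bundle.reduce hC hN hb' h2')
        · push_neg at hrem
          exact ih N (by omega) (by omega) (core1 hC hN hb hrem)

end Statement10Proof
namespace Statement10Proof

/-- Fence paths: a legal chain of steps from `a` to `b`. -/
def FPl (C : Pt → Set Pt) (a b : Pt) : Prop :=
  ∃ l : List Pt, List.Chain (Step C) a (l ++ [b])

lemma FPl.single {C : Pt → Set Pt} {a b : Pt} (h : Step C a b) : FPl C a b :=
  ⟨[], List.Chain.cons h List.Chain.nil⟩

lemma FPl.refl {C : Pt → Set Pt} (a : Pt) : FPl C a a := FPl.single (Or.inl le_rfl)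

lemma FPl.trans {C : Pt → Set Pt} {a b c : Pt} : FPl C a b → FPl C b c → FPl C a c := by
  rintro ⟨l₁, h₁⟩ ⟨l₂, h₂⟩
  refine ⟨l₁ ++ b :: l₂, ?_⟩
  have h : (l₁ ++ b :: l₂) ++ [c] = l₁ ++ b :: (l₂ ++ [c]) := by simp
  rw [h]
  exact List.isChain_cons_split.mpr ⟨h₁, h₂⟩

lemma zig_fpl {C : Pt → Set Pt} (hC : Ctx C) (j₀ : Pt) :
    ∀ {a b : ↥(C j₀)}, Zigzag (↥(C j₀)) a b → FPl C ↑a ↑b := by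
  intro a b z
  induction z with
  | single a => exact FPl.refl _
  | @consLe a b c h p ih =>
      exact FPl.trans (FPl.single (Or.inl (Subtype.coe_le_coe.mpr h))) ih
  | @consGe a b c h p ih =>
      refine FPl.trans (FPl.single (Or.inr ⟨Subtype.coe_le_coe.mpr h, ?_⟩)) ih
      rw [hC.part j₀ _ a.2, hC.part j₀ _ b.2]

lemma getD_last : ∀ (l : List Pt) (x d : Pt), (l ++ [x]).getD l.length d = x := by
  intro l
  induction l with
  | nil => intro x d; rfl
  | cons y t ih => intro x d; simpa using ih x d

lemma getD_mid : ∀ (l : List Pt) (x : Pt) (rest : List Pt) (d : Pt),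
    (l ++ x :: rest).getD l.length d = x := by
  intro l
  induction l with
  | nil => intro x rest d; rfl
  | cons y t ih => intro x rest d; simpa using ih x rest d

lemma chain_getD {R : Pt → Pt → Prop} :
    ∀ (l : List Pt) (a d : Pt), List.Chain R a l → ∀ k, k + 1 ≤ l.length →
      R ((a :: l).getD k d) ((a :: l).getD (k+1) d) := by
  intro l
  induction l with
  | nil => intro a d _ k hk; simp at hk
  | cons b t ih =>
      intro a d hchain k hk
      rw [List.Chain, List.chain_cons] at hchain
      match k with
      | 0 => simpa using hchain.1
      | Nat.succ k' =>
          have hk' : k' + 1 ≤ t.length := by simpa using hk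
          have := ih b d hchain.2 k' hk'
          simpa using this

lemma fpl_cycle {C : Pt → Set Pt} (hC : Ctx C) {a b : Pt} (h1 : FPl C a b) (h2 : FPl C b a)
    (hne : C a ≠ C b) : False := by
  obtain ⟨l₁, hc1⟩ := h1
  obtain ⟨l₂, hc2⟩ := h2
  set t : List Pt := l₁ ++ b :: (l₂ ++ [a]) with ht
  have hchain : List.Chain (Step C) a t := List.isChain_cons_split.mpr ⟨hc1, hc2⟩
  set L : List Pt := a :: t with hL
  set n : ℕ := t.length with hn
  have hT : t = (l₁ ++ b :: l₂) ++ [a] := by simp [ht]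
  have hn1 : n = (l₁ ++ b :: l₂).length + 1 := by rw [hn, hT]; simp; omega
  have hge : 1 ≤ (l₁ ++ b :: l₂).length := by simp; omega
  have hnpos : 1 ≤ n := by omega
  have hn2 : 2 ≤ n := by omega
  have hlastL : L.getD n a = a := by
    have h : L.getD n a = t.getD (n - 1) a := by
      rw [hL]
      have he : n = (n-1) + 1 := by omega
      rw [he]
      simp
    rw [h, hT]
    have he : n - 1 = (l₁ ++ b :: l₂).length := by omega
    rw [he, getD_last]
  have hsteps : ∀ k, k + 1 ≤ n → Step C (L.getD k a) (L.getD (k+1) a) :=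
    chain_getD t a a hchain
  set g : ℕ → Pt := fun i => L.getD (i % n) a with hg
  have hper : ∀ i, g (i + n) = g i := by
    intro i
    show L.getD ((i + n) % n) a = L.getD (i % n) a
    rw [Nat.add_mod_right]
  have hgstep : ∀ i, Step C (g i) (g (i+1)) := by
    intro i
    set k := i % n with hk
    have hklt : k < n := Nat.mod_lt _ (by omega)
    have hsucc : (i + 1) % n = if k + 1 = n then 0 else k + 1 := mod_succ_eq (by omega)
    rcases eq_or_ne (k+1) n with hw | hw
    · have hs : (i+1) % n = 0 := by rw [hsucc, if_pos hw]
      show Step C (L.getD k a) (L.getD ((i+1) % n) a)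
      rw [hs]
      have hst := hsteps k (by omega)
      rw [hw] at hst
      rw [hlastL] at hst
      exact hst
    · have hs : (i+1) % n = k + 1 := by rw [hsucc, if_neg hw]
      show Step C (L.getD k a) (L.getD ((i+1) % n) a)
      rw [hs]
      exact hsteps k (by omega)
  have hbd : ∃ j, C (g j) ≠ C (g (j+1)) := by
    by_contra hall
    push_neg at hall
    set tb : ℕ := l₁.length + 1 with htb
    have htbn : tb < n := by
      rw [hn, ht]
      simp [htb]
    have hbval : L.getD tb a = b := by
      rw [hL, ht, htb]
      have h : (a :: (l₁ ++ b :: (l₂ ++ [a]))) = (a :: l₁) ++ b :: (l₂ ++ [a]) := by simp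
      rw [h]
      have h2 : l₁.length + 1 = (a :: l₁).length := by simp
      rw [h2, getD_mid]
    have key : ∀ k, k ≤ tb → C (L.getD k a) = C a := by
      intro k
      induction k with
      | zero => intro _; rfl
      | succ k' ih =>
          intro hk
          have hk' : k' < n := by omega
          have hk'' : k' + 1 < n := by omega
          have e1 : g k' = L.getD k' a := by
            show L.getD (k' % n) a = L.getD k' a
            rw [Nat.mod_eq_of_lt hk']
          have e2 : g (k' + 1) = L.getD (k'+1) a := by
            show L.getD ((k'+1) % n) a = L.getD (k'+1) a
            rw [Nat.mod_eq_of_lt hk'']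
          have := hall k'
          rw [e1, e2] at this
          rw [← this]
          exact ih (by omega)
    have := key tb (le_refl _)
    rw [hbval] at this
    exact hne this.symm
  obtain ⟨j, hj⟩ := hbd
  exact no_bad hC n hnpos ⟨g, hper, hgstep, j, hj⟩

end Statement10Proof
namespace Statement10Proof

lemma rtg_fpl {C : Pt → Set Pt} (hC : Ctx C) (hconn : ∀ j, ZigzagConnected (C j))
    {A B : Set Pt} (h : Relation.ReflTransGen (chamberRel C) A B) :
    A = B ∨ (B ∈ Set.range C ∧ ∃ a b : Pt, a ∈ A ∧ b ∈ B ∧ FPl C a b) := by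
  induction h with
  | refl => exact Or.inl rfl
  | @tail B' D hAB hBD ih =>
      obtain ⟨hBr, hDr, hcase⟩ := hBD
      rcases hcase with heq | ⟨hne, x, hx, y, hy, hxy⟩
      · subst heq; exact ih
      · right
        refine ⟨hDr, ?_⟩
        rcases ih with heq | ⟨hBr', a0, b0, ha0, hb0, fp⟩
        · exact ⟨x, y, by rw [heq]; exact hx, hy, FPl.single (Or.inl hxy)⟩
        · obtain ⟨j₀, hj₀⟩ := hBr
          have hb0' : b0 ∈ C j₀ := by rw [hj₀]; exact hb0
          have hx' : x ∈ C j₀ := by rw [hj₀]; exact hx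
          obtain ⟨z⟩ := hconn j₀ ⟨b0, hb0'⟩ ⟨x, hx'⟩
          exact ⟨a0, y, ha0, hy, (fp.trans (zig_fpl hC j₀ z)).trans
            (FPl.single (Or.inl hxy))⟩

end Statement10Proof

/-- Let `M` be a persistence module on `(ℝ,≤)²` admitting a finite
convex isotopy subdivision (encoded by the chamber map `C`). Then the
reflexive-transitive closure of the relation `→` on chambers is a partial order:
it is reflexive, transitive and antisymmetric; in particular `p → q` and `q → p`
imply `p = q`. -/
theorem statement10 (F : Type) [Field F] (M : PersistenceModule F (ℝ × ℝ))
    (C : ℝ × ℝ → Set (ℝ × ℝ))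
    (hmem : ∀ j, j ∈ C j)
    (hpart : ∀ j k, k ∈ C j → C k = C j)
    (hfin : (Set.range C).Finite)
    (hconn : ∀ j, ZigzagConnected (C j))
    (hconv : ∀ j, PosetConvex (C j))
    (hiso : ∀ (j x y : ℝ × ℝ), x ∈ C j → y ∈ C j → ∀ h : x ≤ y,
      Function.Bijective (M.map h)) :
    (∀ A ∈ Set.range C, Relation.ReflTransGen (chamberRel C) A A) ∧
    (∀ A B D : Set (ℝ × ℝ), Relation.ReflTransGen (chamberRel C) A B →
      Relation.ReflTransGen (chamberRel C) B D →
      Relation.ReflTransGen (chamberRel C) A D) ∧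
    (∀ A B : Set (ℝ × ℝ), Relation.ReflTransGen (chamberRel C) A B →
      Relation.ReflTransGen (chamberRel C) B A → A = B) ∧
    (∀ A B : Set (ℝ × ℝ), chamberRel C A B → chamberRel C B A → A = B) := by
  have hC : Statement10Proof.Ctx C := ⟨hmem, hpart, hconv⟩
  have antisym : ∀ A B : Set (ℝ × ℝ), Relation.ReflTransGen (chamberRel C) A B →
      Relation.ReflTransGen (chamberRel C) B A → A = B := by
    intro A B h1 h2
    by_contra hne
    rcases Statement10Proof.rtg_fpl hC hconn h1 with heq | ⟨hBr, a, b, ha, hb, fp1⟩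
    · exact hne heq
    rcases Statement10Proof.rtg_fpl hC hconn h2 with heq | ⟨hAr, b', a', hb', ha', fp2⟩
    · exact hne heq.symm
    obtain ⟨jB, hjB⟩ := hBr
    obtain ⟨jA, hjA⟩ := hAr
    obtain ⟨zB⟩ := hconn jB ⟨b, by rw [hjB]; exact hb⟩ ⟨b', by rw [hjB]; exact hb'⟩
    obtain ⟨zA⟩ := hconn jA ⟨a', by rw [hjA]; exact ha'⟩ ⟨a, by rw [hjA]; exact ha⟩
    have F2 : Statement10Proof.FPl C b a :=
      ((Statement10Proof.zig_fpl hC jB zB).trans fp2).trans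
        (Statement10Proof.zig_fpl hC jA zA)
    have hCa : C a = A := by
      rw [hpart jA a (by rw [hjA]; exact ha), hjA]
    have hCb : C b = B := by
      rw [hpart jB b (by rw [hjB]; exact hb), hjB]
    exact Statement10Proof.fpl_cycle hC fp1 F2 (by rw [hCa, hCb]; exact hne)
  refine ⟨?_, ?_, antisym, ?_⟩
  · intro A _
    exact Relation.ReflTransGen.refl
  · intro A B D h1 h2
    exact h1.trans h2
  · intro A B h1 h2
    exact antisym A B (Relation.ReflTransGen.single h1) (Relation.ReflTransGen.single h2)
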